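/- arXiv:2304.01707 — 3 statements merged into one kernel-verified Lean document; each statement's English description precedes it below -/
import Mathlib

section
/- Let b_0, …, b_N : Ω → ℝ take values in {0,1} and let z_0, …, z_N : Ω → ℝ^n have square-integrable components, and assume the 2(N+1) random elements b_0, …, b_N, z_0, …, z_N are mutually independent. Set p_j := E[b_j], m_j := E[z_j], and y := ∑_{j=0}^{N} b_j • z_j. Then the second-moment matrix satisfies E[y yᵀ] = ∑_{j=0}^{N} p_j · E[z_j z_jᵀ] + ∑_{s ≠ l} p_s p_l · m_s m_lᵀ. -/
open MeasureTheory ProbabilityTheory Finset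

/-- second moment of the delayed measurement: if the `{0,1}`-valued
indicators `b 0, …, b N` and the square-integrable measurements `z 0, …, z N` are
mutually independent (as a family of `2(N+1)` random elements), then, with
`p j = E[b j]`, `m j = E[z j]` and `y = ∑_j b_j • z_j`,
`E[y yᵀ] = ∑_j p_j E[z_j z_jᵀ] + ∑_{s ≠ l} p_s p_l m_s m_lᵀ`. -/
theorem secondMoment_delayed_measurement
    {Ω : Type*} [MeasurableSpace Ω] (P : Measure Ω) [IsProbabilityMeasure P]
    (n N : ℕ)
    (b : Fin (N + 1) → Ω → ℝ) (z : Fin (N + 1) → Ω → EuclideanSpace ℝ (Fin n))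
    (hbmeas : ∀ j, Measurable (b j))
    (hzmeas : ∀ j, Measurable (z j))
    (hval : ∀ j ω, b j ω = 0 ∨ b j ω = 1)
    (hz2 : ∀ j i, MemLp (fun ω => z j ω i) 2 P)
    (hindep : iIndepFun
      (m := fun s : Fin (N + 1) ⊕ Fin (N + 1) =>
        Sum.rec (motive := fun s =>
            MeasurableSpace (Sum.elim (fun _ => ℝ) (fun _ => EuclideanSpace ℝ (Fin n)) s))
          (fun _ => (inferInstance : MeasurableSpace ℝ))
          (fun _ => (inferInstance : MeasurableSpace (EuclideanSpace ℝ (Fin n)))) s)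
      (fun s => Sum.rec (motive := fun s =>
            Ω → Sum.elim (fun _ => ℝ) (fun _ => EuclideanSpace ℝ (Fin n)) s)
          b z s) P) :
    (Matrix.of fun i l : Fin n =>
        ∫ ω, (∑ j : Fin (N + 1), b j ω • z j ω) i * (∑ j : Fin (N + 1), b j ω • z j ω) l ∂P)
      = (∑ j : Fin (N + 1), (∫ ω, b j ω ∂P) •
            Matrix.of (fun i l : Fin n => ∫ ω, z j ω i * z j ω l ∂P))
        + ∑ s : Fin (N + 1), ∑ l ∈ Finset.univ.erase s,
            ((∫ ω, b s ω ∂P) * (∫ ω, b l ω ∂P)) •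
              Matrix.vecMulVec (fun i => (∫ ω, z s ω ∂P) i) (fun i => (∫ ω, z l ω ∂P) i) := by
  classical
  -- measurability of the joint family
  have hfmeas : ∀ s : Fin (N + 1) ⊕ Fin (N + 1),
      @Measurable Ω (Sum.elim (fun _ => ℝ) (fun _ => EuclideanSpace ℝ (Fin n)) s) _
        ((fun s : Fin (N + 1) ⊕ Fin (N + 1) =>
          Sum.rec (motive := fun s =>
              MeasurableSpace (Sum.elim (fun _ => ℝ) (fun _ => EuclideanSpace ℝ (Fin n)) s))
            (fun _ => (inferInstance : MeasurableSpace ℝ))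
            (fun _ => (inferInstance : MeasurableSpace (EuclideanSpace ℝ (Fin n)))) s) s)
        ((fun s => Sum.rec (motive := fun s =>
            Ω → Sum.elim (fun _ => ℝ) (fun _ => EuclideanSpace ℝ (Fin n)) s)
          b z s) s) := by
    rintro (j | j)
    · exact hbmeas j
    · exact hzmeas j
  have hproj : ∀ i : Fin n, Measurable (fun v : EuclideanSpace ℝ (Fin n) => v i) :=
    fun i => (EuclideanSpace.proj i (𝕜 := ℝ)).continuous.measurable
  -- basic independence facts
  have hbz : ∀ j, IndepFun (b j) (z j) P := fun j =>
    hindep.indepFun (i := Sum.inl j) (j := Sum.inr j) (by simp)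
  have hbzi : ∀ j (i : Fin n), IndepFun (b j) (fun ω => z j ω i) P := fun j i =>
    (hbz j).comp measurable_id (hproj i)
  -- integrability facts
  have hbI : ∀ j, Integrable (b j) P := fun j =>
    (memLp_top_of_bound (hbmeas j).aestronglyMeasurable 1
      (ae_of_all _ fun ω => by rcases hval j ω with h | h <;> simp [h])).integrable le_top
  have hzI : ∀ j (i : Fin n), Integrable (fun ω => z j ω i) P := fun j i =>
    (hz2 j i).integrable one_le_two
  have hmulI : ∀ (X Y : Ω → ℝ), MemLp X 2 P → MemLp Y 2 P →
      Integrable (fun ω => X ω * Y ω) P := by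
    intro X Y hX hY
    rw [← memLp_one_iff_integrable]
    have := hX.smul (𝕜 := ℝ) hY (p := 2) (q := 2) (r := 1)
    simpa [smul_eq_mul, mul_comm, Pi.mul_def] using this
  have hbz2 : ∀ j (i : Fin n), MemLp (fun ω => b j ω * z j ω i) 2 P := by
    intro j i
    refine MemLp.of_le_mul (c := 1) (hz2 j i)
      ((hbmeas j).mul ((hproj i).comp (hzmeas j))).aestronglyMeasurable
      (ae_of_all _ fun ω => ?_)
    rcases hval j ω with h | h <;> simp [h, abs_nonneg, Real.norm_eq_abs, abs_mul]
  -- the integral of `z j` componentwise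
  have hvecint : ∀ j (i : Fin n), (∫ ω, z j ω ∂P) i = ∫ ω, z j ω i ∂P := by
    intro j i
    have hrepr : z j = fun ω => ∑ k : Fin n,
        (z j ω k) • (EuclideanSpace.single k (1 : ℝ)) := by
      funext ω
      have := (EuclideanSpace.basisFun (Fin n) ℝ).sum_repr (z j ω)
      simpa [EuclideanSpace.basisFun_apply, EuclideanSpace.basisFun_repr] using this.symm
    conv_lhs => rw [hrepr]
    rw [integral_finset_sum _ (fun k _ => (hzI j k).smul_const _)]
    simp only [integral_smul_const]
    have happ0 : (∑ k : Fin n, (∫ ω, z j ω k ∂P) • EuclideanSpace.single k (1 : ℝ)) i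
        = ∑ k : Fin n, ((∫ ω, z j ω k ∂P) • EuclideanSpace.single k (1 : ℝ)) i :=
      map_sum (EuclideanSpace.proj i (𝕜 := ℝ))
        (fun k => (∫ ω, z j ω k ∂P) • EuclideanSpace.single k (1 : ℝ)) univ
    rw [happ0]
    simp [EuclideanSpace.single_apply]
  -- apply of sums of vectors
  have happ : ∀ (ω : Ω) (i : Fin n),
      (∑ j : Fin (N + 1), b j ω • z j ω) i = ∑ j : Fin (N + 1), b j ω * z j ω i := by
    intro ω i
    have h1 : (∑ j : Fin (N + 1), b j ω • z j ω) i
        = ∑ j : Fin (N + 1), (b j ω • z j ω) i :=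
      map_sum (EuclideanSpace.proj i (𝕜 := ℝ)) (fun j => b j ω • z j ω) univ
    rw [h1]
    exact Finset.sum_congr rfl fun j _ => rfl
  -- entrywise proof
  ext i l
  simp only [Matrix.of_apply, Matrix.add_apply, Matrix.sum_apply, Matrix.smul_apply,
    Matrix.vecMulVec_apply, smul_eq_mul]
  -- expand the integrand into a double sum
  have hint1 : ∀ j k : Fin (N + 1),
      Integrable (fun ω => (b j ω * z j ω i) * (b k ω * z k ω l)) P := fun j k =>
    hmulI _ _ (hbz2 j i) (hbz2 k l)
  have step1 : (∫ ω, (∑ j : Fin (N + 1), b j ω • z j ω) i *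
        (∑ j : Fin (N + 1), b j ω • z j ω) l ∂P)
      = ∑ j : Fin (N + 1), ∑ k : Fin (N + 1),
          ∫ ω, (b j ω * z j ω i) * (b k ω * z k ω l) ∂P := by
    calc (∫ ω, (∑ j : Fin (N + 1), b j ω • z j ω) i *
            (∑ j : Fin (N + 1), b j ω • z j ω) l ∂P)
        = ∫ ω, ∑ j : Fin (N + 1), ∑ k : Fin (N + 1),
            (b j ω * z j ω i) * (b k ω * z k ω l) ∂P := by
          congr 1
          funext ω
          rw [happ ω i, happ ω l, Finset.sum_mul_sum]
      _ = ∑ j : Fin (N + 1), ∫ ω, ∑ k : Fin (N + 1),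
            (b j ω * z j ω i) * (b k ω * z k ω l) ∂P :=
          integral_finset_sum _ (fun j _ => integrable_finset_sum _ (fun k _ => hint1 j k))
      _ = ∑ j : Fin (N + 1), ∑ k : Fin (N + 1),
            ∫ ω, (b j ω * z j ω i) * (b k ω * z k ω l) ∂P :=
          Finset.sum_congr rfl fun j _ => integral_finset_sum _ (fun k _ => hint1 j k)
  rw [step1]
  -- compute the diagonal terms
  have hdiag : ∀ j : Fin (N + 1),
      (∫ ω, (b j ω * z j ω i) * (b j ω * z j ω l) ∂P)
        = (∫ ω, b j ω ∂P) * ∫ ω, z j ω i * z j ω l ∂P := by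
    intro j
    have heq : (fun ω => (b j ω * z j ω i) * (b j ω * z j ω l))
        = fun ω => b j ω * (z j ω i * z j ω l) := by
      funext ω
      rcases hval j ω with h | h <;> simp [h]
    rw [heq]
    have hind : IndepFun (b j) (fun ω => z j ω i * z j ω l) P :=
      (hbz j).comp measurable_id ((hproj i).mul (hproj l))
    exact hind.integral_fun_mul_eq_mul_integral (hbI j).aestronglyMeasurable (hmulI _ _ (hz2 j i) (hz2 j l)).aestronglyMeasurable
  -- compute the off-diagonal terms
  have hoff : ∀ j k : Fin (N + 1), j ≠ k →
      (∫ ω, (b j ω * z j ω i) * (b k ω * z k ω l) ∂P)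
        = ((∫ ω, b j ω ∂P) * (∫ ω, b k ω ∂P)) *
            ((∫ ω, z j ω ∂P) i * (∫ ω, z k ω ∂P) l) := by
    intro j k hjk
    have h4 : IndepFun (fun ω => (b j ω, z j ω)) (fun ω => (b k ω, z k ω)) P :=
      hindep.indepFun_prodMk_prodMk hfmeas (Sum.inl j) (Sum.inr j) (Sum.inl k) (Sum.inr k)
        (by simp [hjk]) (by simp) (by simp) (by simp [hjk])
    have hind : IndepFun (fun ω => b j ω * z j ω i) (fun ω => b k ω * z k ω l) P :=
      h4.comp (measurable_fst.mul ((hproj i).comp measurable_snd))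
        (measurable_fst.mul ((hproj l).comp measurable_snd))
    have e1 : (∫ ω, b j ω * z j ω i ∂P) = (∫ ω, b j ω ∂P) * ∫ ω, z j ω i ∂P :=
      (hbzi j i).integral_fun_mul_eq_mul_integral (hbI j).aestronglyMeasurable (hzI j i).aestronglyMeasurable
    have e2 : (∫ ω, b k ω * z k ω l ∂P) = (∫ ω, b k ω ∂P) * ∫ ω, z k ω l ∂P :=
      (hbzi k l).integral_fun_mul_eq_mul_integral (hbI k).aestronglyMeasurable (hzI k l).aestronglyMeasurable
    have hmain := hind.integral_fun_mul_eq_mul_integral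
      ((hbz2 j i).integrable one_le_two).aestronglyMeasurable ((hbz2 k l).integrable one_le_two).aestronglyMeasurable
    calc (∫ ω, (b j ω * z j ω i) * (b k ω * z k ω l) ∂P)
        = (∫ ω, b j ω * z j ω i ∂P) * ∫ ω, b k ω * z k ω l ∂P := hmain
      _ = ((∫ ω, b j ω ∂P) * (∫ ω, b k ω ∂P)) *
            ((∫ ω, z j ω ∂P) i * (∫ ω, z k ω ∂P) l) := by
          rw [e1, e2, hvecint j i, hvecint k l]; ring
  -- assemble
  calc (∑ j : Fin (N + 1), ∑ k : Fin (N + 1),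
          ∫ ω, (b j ω * z j ω i) * (b k ω * z k ω l) ∂P)
      = ∑ j : Fin (N + 1),
          ((∫ ω, (b j ω * z j ω i) * (b j ω * z j ω l) ∂P)
            + ∑ k ∈ univ.erase j, ∫ ω, (b j ω * z j ω i) * (b k ω * z k ω l) ∂P) :=
        Finset.sum_congr rfl fun j _ => (Finset.add_sum_erase _ _ (mem_univ j)).symm
    _ = (∑ j : Fin (N + 1), ∫ ω, (b j ω * z j ω i) * (b j ω * z j ω l) ∂P)
          + ∑ j : Fin (N + 1), ∑ k ∈ univ.erase j,
              ∫ ω, (b j ω * z j ω i) * (b k ω * z k ω l) ∂P :=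
        Finset.sum_add_distrib
    _ = _ := by
        congr 1
        · exact Finset.sum_congr rfl fun j _ => hdiag j
        · refine Finset.sum_congr rfl fun j _ => Finset.sum_congr rfl fun k hk => ?_
          exact hoff j k (Ne.symm (Finset.mem_erase.mp hk).1)
end

section
/- Let b_0, …, b_N : Ω → ℝ take values in {0,1} and let z_0, …, z_N : Ω → ℝ^n have square-integrable components, and assume the 2(N+1) random elements b_0, …, b_N, z_0, …, z_N are mutually independent. Set p_j := E[b_j], m_j := E[z_j], and y := ∑_{j=0}^{N} b_j • z_j. Then the covariance matrix of y satisfies Cov(y) = ∑_{j=0}^{N} p_j · Cov(z_j) + ∑_{j=0}^{N} p_j (1 − p_j) · m_j m_jᵀ. -/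
open MeasureTheory ProbabilityTheory Finset

/-- The covariance matrix `Cov(u) = E[(u - E u)(u - E u)ᵀ]` of a random vector
`u : Ω → ℝ^n`. -/
noncomputable def covMatrix {Ω : Type*} [MeasurableSpace Ω] (P : Measure Ω) {n : ℕ}
    (u : Ω → EuclideanSpace ℝ (Fin n)) : Matrix (Fin n) (Fin n) ℝ :=
  Matrix.of fun i l : Fin n =>
    ∫ ω, (u ω i - (∫ ω', u ω' ∂P) i) * (u ω l - (∫ ω', u ω' ∂P) l) ∂P

lemma l2mul {Ω : Type*} [MeasurableSpace Ω] {P : Measure Ω} {f g : Ω → ℝ}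
    (hf : MemLp f 2 P) (hg : MemLp g 2 P) : Integrable (fun ω => f ω * g ω) P := by
  have h1 := hf.integrable_sq
  have h2 := hg.integrable_sq
  refine (h1.add h2).mono' (hf.1.mul hg.1) (ae_of_all _ fun ω => ?_)
  simp only [Pi.add_apply, Real.norm_eq_abs, abs_mul]
  nlinarith [sq_nonneg (|f ω| - |g ω|), sq_abs (f ω), sq_abs (g ω), abs_nonneg (f ω),
    abs_nonneg (g ω)]

lemma euclid_sum_apply {ι : Type*} {n : ℕ} (s : Finset ι) (f : ι → EuclideanSpace ℝ (Fin n))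
    (i : Fin n) : (∑ j ∈ s, f j) i = ∑ j ∈ s, f j i :=
  map_sum (EuclideanSpace.projₗ (𝕜 := ℝ) i) f s

lemma euclid_integrable {Ω : Type*} [MeasurableSpace Ω] {P : Measure Ω} {n : ℕ}
    {u : Ω → EuclideanSpace ℝ (Fin n)} (h : ∀ i, Integrable (fun ω => u ω i) P) :
    Integrable u P := by
  have hrep : u = fun ω => ∑ i : Fin n, u ω i • EuclideanSpace.single i (1 : ℝ) := by
    funext ω
    ext k
    rw [euclid_sum_apply]
    simp [EuclideanSpace.single_apply]
  rw [hrep]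
  exact integrable_finset_sum _ fun i _ => (h i).smul_const _

lemma euclid_integral_apply {Ω : Type*} [MeasurableSpace Ω] {P : Measure Ω} {n : ℕ}
    {u : Ω → EuclideanSpace ℝ (Fin n)} (hu : Integrable u P) (i : Fin n) :
    (∫ ω, u ω ∂P) i = ∫ ω, u ω i ∂P := by
  have := (EuclideanSpace.proj (𝕜 := ℝ) i).integral_comp_comm hu
  simpa using this.symm

lemma covMatrix_apply_eq {Ω : Type*} [MeasurableSpace Ω] (P : Measure Ω) [IsProbabilityMeasure P]
    {n : ℕ} (u : Ω → EuclideanSpace ℝ (Fin n)) (h2 : ∀ i, MemLp (fun ω => u ω i) 2 P)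
    (i l : Fin n) :
    covMatrix P u i l =
      (∫ ω, u ω i * u ω l ∂P) - (∫ ω, u ω i ∂P) * (∫ ω, u ω l ∂P) := by
  have hint : ∀ k, Integrable (fun ω => u ω k) P := fun k => (h2 k).integrable one_le_two
  have hu : Integrable u P := euclid_integrable hint
  have hmul : Integrable (fun ω => u ω i * u ω l) P := l2mul (h2 i) (h2 l)
  simp only [covMatrix, Matrix.of_apply]
  rw [euclid_integral_apply hu i, euclid_integral_apply hu l]
  set mi := ∫ ω, u ω i ∂P with hmi
  set ml := ∫ ω, u ω l ∂P with hml
  have hexp : ∀ ω, (u ω i - mi) * (u ω l - ml)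
      = u ω i * u ω l - mi * u ω l - (ml * u ω i - mi * ml) := fun ω => by ring
  simp_rw [hexp]
  have I2 : Integrable (fun ω => mi * u ω l) P := (hint l).const_mul mi
  have I3 : Integrable (fun ω => ml * u ω i) P := (hint i).const_mul ml
  have I4 : Integrable (fun _ : Ω => mi * ml) P := integrable_const _
  have I1 : Integrable (fun ω => u ω i * u ω l - mi * u ω l) P := hmul.sub I2
  have I5 : Integrable (fun ω => ml * u ω i - mi * ml) P := I3.sub I4
  rw [integral_sub I1 I5, integral_sub hmul I2, integral_sub I3 I4,
    integral_const_mul, integral_const_mul, integral_const]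
  simp only [measure_univ, ENNReal.toReal_one, one_smul, smul_eq_mul, probReal_univ]
  rw [← hmi, ← hml]
  ring

/-- predicted measurement covariance, Lemma 3 of the paper: if the
`{0,1}`-valued indicators `b 0, …, b N` and the square-integrable measurements
`z 0, …, z N` are mutually independent, then, with `p j = E[b j]`, `m j = E[z j]` and
`y = ∑_j b_j • z_j`,
`Cov(y) = ∑_j p_j Cov(z_j) + ∑_j p_j (1 - p_j) m_j m_jᵀ`. -/
theorem covariance_delayed_measurement
    {Ω : Type*} [MeasurableSpace Ω] (P : Measure Ω) [IsProbabilityMeasure P]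
    (n N : ℕ)
    (b : Fin (N + 1) → Ω → ℝ) (z : Fin (N + 1) → Ω → EuclideanSpace ℝ (Fin n))
    (hbmeas : ∀ j, Measurable (b j))
    (hzmeas : ∀ j, Measurable (z j))
    (hval : ∀ j ω, b j ω = 0 ∨ b j ω = 1)
    (hz2 : ∀ j i, MemLp (fun ω => z j ω i) 2 P)
    (hindep : iIndepFun
      (m := fun s : Fin (N + 1) ⊕ Fin (N + 1) =>
        Sum.rec (motive := fun s =>
            MeasurableSpace (Sum.elim (fun _ => ℝ) (fun _ => EuclideanSpace ℝ (Fin n)) s))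
          (fun _ => (inferInstance : MeasurableSpace ℝ))
          (fun _ => (inferInstance : MeasurableSpace (EuclideanSpace ℝ (Fin n)))) s)
      (fun s => Sum.rec (motive := fun s =>
            Ω → Sum.elim (fun _ => ℝ) (fun _ => EuclideanSpace ℝ (Fin n)) s)
          b z s) P) :
    covMatrix P (fun ω => ∑ j : Fin (N + 1), b j ω • z j ω)
      = (∑ j : Fin (N + 1), (∫ ω, b j ω ∂P) • covMatrix P (z j))
        + ∑ j : Fin (N + 1),
            ((∫ ω, b j ω ∂P) * (1 - ∫ ω, b j ω ∂P)) •
              Matrix.vecMulVec (fun i => (∫ ω, z j ω ∂P) i) (fun i => (∫ ω, z j ω ∂P) i) := by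
  classical
  letI : ∀ s : Fin (N + 1) ⊕ Fin (N + 1),
      MeasurableSpace (Sum.elim (fun _ => ℝ) (fun _ => EuclideanSpace ℝ (Fin n)) s) := fun s =>
    Sum.rec (motive := fun s =>
        MeasurableSpace (Sum.elim (fun _ => ℝ) (fun _ => EuclideanSpace ℝ (Fin n)) s))
      (fun _ => (inferInstance : MeasurableSpace ℝ))
      (fun _ => (inferInstance : MeasurableSpace (EuclideanSpace ℝ (Fin n)))) s
  -- basic measurability and integrability facts
  have hzi : ∀ j (i : Fin n), Measurable fun ω => z j ω i := fun j i =>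
    ((EuclideanSpace.proj (𝕜 := ℝ) i).continuous.measurable).comp (hzmeas j)
  have habs : ∀ j ω, |b j ω| ≤ 1 := fun j ω => by rcases hval j ω with h | h <;> simp [h]
  have hb2 : ∀ j, MemLp (b j) 2 P := fun j => by
    refine MemLp.of_le (memLp_const (1 : ℝ)) (hbmeas j).aestronglyMeasurable
      (ae_of_all _ fun ω => ?_)
    simpa [Real.norm_eq_abs] using habs j ω
  have hbz2 : ∀ j (i : Fin n), MemLp (fun ω => b j ω * z j ω i) 2 P := fun j i => by
    refine MemLp.of_le (hz2 j i)
      ((hbmeas j).aestronglyMeasurable.mul (hzi j i).aestronglyMeasurable)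
      (ae_of_all _ fun ω => ?_)
    simp only [Real.norm_eq_abs, abs_mul]
    exact mul_le_of_le_one_left (abs_nonneg _) (habs j ω)
  -- independence consequences
  have hind_bz : ∀ j : Fin (N + 1), IndepFun (b j) (z j) P := fun j =>
    hindep.indepFun (show (Sum.inl j : Fin (N + 1) ⊕ Fin (N + 1)) ≠ Sum.inr j by simp)
  have hEbz : ∀ j (i : Fin n),
      ∫ ω, b j ω * z j ω i ∂P = (∫ ω, b j ω ∂P) * ∫ ω, z j ω i ∂P := fun j i => by
    have h := (hind_bz j).comp measurable_id
      (EuclideanSpace.proj (𝕜 := ℝ) i).continuous.measurable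
    exact h.integral_mul_eq_mul_integral (hbmeas j).aestronglyMeasurable (hzi j i).aestronglyMeasurable
  have hEzz : ∀ j (i l : Fin n),
      ∫ ω, b j ω * (z j ω i * z j ω l) ∂P
        = (∫ ω, b j ω ∂P) * ∫ ω, z j ω i * z j ω l ∂P := fun j i l => by
    have hm : Measurable fun v : EuclideanSpace ℝ (Fin n) =>
        EuclideanSpace.proj (𝕜 := ℝ) i v * EuclideanSpace.proj (𝕜 := ℝ) l v :=
      ((EuclideanSpace.proj (𝕜 := ℝ) i).continuous.measurable).mul
        ((EuclideanSpace.proj (𝕜 := ℝ) l).continuous.measurable)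
    have h := (hind_bz j).comp measurable_id hm
    exact h.integral_mul_eq_mul_integral (hbmeas j).aestronglyMeasurable
      ((hzi j i).mul (hzi j l)).aestronglyMeasurable
  have hFmeas : ∀ s : Fin (N + 1) ⊕ Fin (N + 1),
      Measurable ((fun s => Sum.rec (motive := fun s =>
            Ω → Sum.elim (fun _ => ℝ) (fun _ => EuclideanSpace ℝ (Fin n)) s)
          b z s) s) := by
    rintro (j | j)
    · exact hbmeas j
    · exact hzmeas j
  have hpair : ∀ (j k : Fin (N + 1)) (i l : Fin n), j ≠ k →
      IndepFun (fun ω => b j ω * z j ω i) (fun ω => b k ω * z k ω l) P := by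
    intro j k i l hjk
    have hdisj : Disjoint ({Sum.inl j, Sum.inr j} : Finset (Fin (N + 1) ⊕ Fin (N + 1)))
        {Sum.inl k, Sum.inr k} := by
      simp only [Finset.disjoint_left, Finset.mem_insert, Finset.mem_singleton]
      rintro a (rfl | rfl) <;> simp [hjk]
    have H := hindep.indepFun_finset {Sum.inl j, Sum.inr j} {Sum.inl k, Sum.inr k} hdisj hFmeas
    have hjS : (Sum.inl j : Fin (N + 1) ⊕ Fin (N + 1))
        ∈ ({Sum.inl j, Sum.inr j} : Finset _) := by simp
    have hjS' : (Sum.inr j : Fin (N + 1) ⊕ Fin (N + 1))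
        ∈ ({Sum.inl j, Sum.inr j} : Finset _) := by simp
    have hkT : (Sum.inl k : Fin (N + 1) ⊕ Fin (N + 1))
        ∈ ({Sum.inl k, Sum.inr k} : Finset _) := by simp
    have hkT' : (Sum.inr k : Fin (N + 1) ⊕ Fin (N + 1))
        ∈ ({Sum.inl k, Sum.inr k} : Finset _) := by simp
    have hφ : Measurable fun v : ∀ s : ({Sum.inl j, Sum.inr j} :
          Finset (Fin (N + 1) ⊕ Fin (N + 1))),
          Sum.elim (fun _ => ℝ) (fun _ => EuclideanSpace ℝ (Fin n)) (s : Fin (N+1) ⊕ Fin (N+1)) =>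
        (show ℝ from v ⟨Sum.inl j, hjS⟩) *
          EuclideanSpace.proj (𝕜 := ℝ) i
            (show EuclideanSpace ℝ (Fin n) from v ⟨Sum.inr j, hjS'⟩) := by
      refine Measurable.mul ?_
        (((EuclideanSpace.proj (𝕜 := ℝ) i).continuous.measurable).comp ?_)
      · exact measurable_pi_apply _
      · exact measurable_pi_apply _
    have hψ : Measurable fun v : ∀ s : ({Sum.inl k, Sum.inr k} :
          Finset (Fin (N + 1) ⊕ Fin (N + 1))),
          Sum.elim (fun _ => ℝ) (fun _ => EuclideanSpace ℝ (Fin n)) (s : Fin (N+1) ⊕ Fin (N+1)) =>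
        (show ℝ from v ⟨Sum.inl k, hkT⟩) *
          EuclideanSpace.proj (𝕜 := ℝ) l
            (show EuclideanSpace ℝ (Fin n) from v ⟨Sum.inr k, hkT'⟩) := by
      refine Measurable.mul ?_
        (((EuclideanSpace.proj (𝕜 := ℝ) l).continuous.measurable).comp ?_)
      · exact measurable_pi_apply _
      · exact measurable_pi_apply _
    exact H.comp hφ hψ
  -- coordinates of the sum
  have happ : ∀ (ω) (i : Fin n),
      (∑ j : Fin (N + 1), b j ω • z j ω) i = ∑ j : Fin (N + 1), b j ω * z j ω i := fun ω i => by
    rw [euclid_sum_apply]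
    simp [smul_eq_mul]
  have hy2 : ∀ i : Fin n,
      MemLp (fun ω => (∑ j : Fin (N + 1), b j ω • z j ω) i) 2 P := fun i => by
    simp only [happ]
    exact memLp_finset_sum _ fun j _ => hbz2 j i
  -- entrywise proof
  ext i l
  rw [covMatrix_apply_eq P _ hy2 i l]
  simp only [happ]
  -- expand integrals of sums
  rw [integral_finset_sum _ (fun j _ => (hbz2 j i).integrable one_le_two),
    integral_finset_sum _ (fun j _ => (hbz2 j l).integrable one_le_two)]
  have hprod : ∀ ω : Ω, (∑ j : Fin (N + 1), b j ω * z j ω i)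
      * (∑ k : Fin (N + 1), b k ω * z k ω l)
      = ∑ j : Fin (N + 1), ∑ k : Fin (N + 1), (b j ω * z j ω i) * (b k ω * z k ω l) :=
    fun ω => Finset.sum_mul_sum _ _ _ _
  simp_rw [hprod]
  rw [integral_finset_sum _ (fun j _ => integrable_finset_sum _
    (fun k _ => l2mul (hbz2 j i) (hbz2 k l)))]
  have hswap : ∀ j : Fin (N + 1),
      (∫ ω, ∑ k : Fin (N + 1), (b j ω * z j ω i) * (b k ω * z k ω l) ∂P)
        = ∑ k : Fin (N + 1), ∫ ω, (b j ω * z j ω i) * (b k ω * z k ω l) ∂P := fun j =>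
    integral_finset_sum _ fun k _ => l2mul (hbz2 j i) (hbz2 k l)
  rw [Finset.sum_congr rfl fun j _ => hswap j]
  -- right hand side entries
  simp only [Matrix.add_apply, Matrix.sum_apply, Matrix.smul_apply, Matrix.vecMulVec_apply,
    smul_eq_mul]
  rw [Finset.sum_mul_sum, ← Finset.sum_add_distrib, ← Finset.sum_sub_distrib]
  refine Finset.sum_congr rfl fun j _ => ?_
  rw [← Finset.sum_sub_distrib, Finset.sum_eq_single j ?off ?notmem]
  case off =>
    intro k _ hkj
    have hjk := (hpair j k i l (Ne.symm hkj)).integral_mul_eq_mul_integral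
      ((hbmeas j).mul (hzi j i)).aestronglyMeasurable ((hbmeas k).mul (hzi k l)).aestronglyMeasurable
    simp only [Pi.mul_apply] at hjk
    rw [hjk, sub_self]
  case notmem => intro h; exact absurd (Finset.mem_univ j) h
  -- diagonal term
  have hzint : Integrable (z j) P := euclid_integrable fun k => (hz2 j k).integrable one_le_two
  have hbb : ∀ ω, (b j ω * z j ω i) * (b j ω * z j ω l)
      = b j ω * (z j ω i * z j ω l) := fun ω => by
    rcases hval j ω with h | h <;> rw [h] <;> ring
  simp_rw [hbb]
  rw [hEzz j i l, covMatrix_apply_eq P (z j) (hz2 j) i l, hEbz j i, hEbz j l,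
    euclid_integral_apply hzint i, euclid_integral_apply hzint l]
  ring
end

section
/- Fix N ∈ ℕ and k, m ≥ N with k ≠ m. Let α : ℕ → ℕ → Ω → ℝ be measurable random variables taking values in {0,1}, and let v : ℕ → Ω → ℝ^n be random vectors with square-integrable components such that E[v_p] = 0 for all p and E[v_p v_qᵀ] = 0 (the zero n×n matrix) for all p ≠ q. Assume the σ-algebra generated by the whole family {α a b} is independent of the σ-algebra generated by the whole family {v_p}. Define β k j := (α k j) · ∏_{i=1}^{j} (1 − α (k-i) (j-i)) and ν_k := ∑_{j=0}^{N} β k j • v_{k−j}. Then the modified noise sequence is uncorrelated across time: E[ν_k ν_mᵀ] = 0 (the zero n×n matrix). -/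
open MeasureTheory ProbabilityTheory Finset

/-- The delay indicator `β k j = α k j ∏_{i=1}^j (1 - α (k-i) (j-i))`. -/
noncomputable def delayIndicator {Ω : Type*} (α : ℕ → ℕ → Ω → ℝ) (k j : ℕ) (ω : Ω) : ℝ :=
  α k j ω * ∏ i ∈ Finset.Icc 1 j, (1 - α (k - i) (j - i) ω)

/-- The matrix of second cross moments `E[u wᵀ]` of random vectors `u, w : Ω → ℝ^n`. -/
noncomputable def secondMomentMatrix {Ω : Type*} [MeasurableSpace Ω] (P : Measure Ω)
    {n : ℕ} (u w : Ω → EuclideanSpace ℝ (Fin n)) : Matrix (Fin n) (Fin n) ℝ :=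
  Matrix.of fun i l : Fin n => ∫ ω, u ω i * w ω l ∂P

/-- The modified measurement noise `ν_k = ∑_{j=0}^N β k j • v_{k-j}` of the
delayed-measurement model. -/
noncomputable def modifiedNoise {Ω : Type*} (α : ℕ → ℕ → Ω → ℝ)
    {n : ℕ} (v : ℕ → Ω → EuclideanSpace ℝ (Fin n)) (N k : ℕ) (ω : Ω) :
    EuclideanSpace ℝ (Fin n) :=
  ∑ j ∈ Finset.range (N + 1), delayIndicator α k j ω • v (k - j) ω

lemma delayIndicator_mem {Ω : Type*} (α : ℕ → ℕ → Ω → ℝ)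
    (hval : ∀ a b ω, α a b ω = 0 ∨ α a b ω = 1)
    (a b : ℕ) (ω : Ω) : delayIndicator α a b ω = 0 ∨ delayIndicator α a b ω = 1 := by
  unfold delayIndicator
  rcases hval a b ω with h | h
  · left; rw [h, zero_mul]
  · rw [h, one_mul]
    refine Finset.prod_induction _ (fun x => x = 0 ∨ x = 1) ?_ (Or.inr rfl) ?_
    · rintro x y (hx | hx) (hy | hy) <;> simp [hx, hy]
    · intro i _
      rcases hval (a - i) (b - i) ω with h' | h' <;> simp [h']

lemma delayIndicator_mul_eq_zero {Ω : Type*} (α : ℕ → ℕ → Ω → ℝ)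
    (hval : ∀ a b ω, α a b ω = 0 ∨ α a b ω = 1)
    {k m j j' : ℕ} (hjk : j ≤ k) (hj'm : j' ≤ m) (hkm : k < m)
    (heq : k - j = m - j') (ω : Ω) :
    delayIndicator α k j ω * delayIndicator α m j' ω = 0 := by
  have hd : m - k ∈ Finset.Icc 1 j' := by
    rw [Finset.mem_Icc]; omega
  unfold delayIndicator
  rw [← Finset.prod_erase_mul _ _ hd]
  have h1 : m - (m - k) = k := by omega
  have h2 : j' - (m - k) = j := by omega
  rw [h1, h2]
  rcases hval k j ω with h | h <;> rw [h] <;> ring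


/-- Appendix A, Cases I, II and IV: the modified measurement noise
sequence of the delayed-measurement model is uncorrelated across distinct times:
`E[ν_k ν_mᵀ] = 0` for `k ≠ m`, whenever the original noises are centred, mutually
uncorrelated and independent (as a family) of the `{0,1}`-valued family `α`. -/
theorem modifiedNoise_uncorrelated_across_time
    {Ω : Type*} [MeasurableSpace Ω] (P : Measure Ω) [IsProbabilityMeasure P]
    (n N k m : ℕ) (hNk : N ≤ k) (hNm : N ≤ m) (hkm : k ≠ m)
    (α : ℕ → ℕ → Ω → ℝ)
    (v : ℕ → Ω → EuclideanSpace ℝ (Fin n))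
    (hαmeas : ∀ a b, Measurable (α a b))
    (hval : ∀ a b ω, α a b ω = 0 ∨ α a b ω = 1)
    (hvmeas : ∀ p, Measurable (v p))
    (hv2 : ∀ p i, MemLp (fun ω => v p ω i) 2 P)
    (hvmean : ∀ p, ∫ ω, v p ω ∂P = 0)
    (hvuncorr : ∀ p q, p ≠ q → secondMomentMatrix P (v p) (v q) = 0)
    (hindep : Indep (⨆ a, ⨆ b, MeasurableSpace.comap (α a b) inferInstance)
      (⨆ p, MeasurableSpace.comap (v p) inferInstance) P) :
    secondMomentMatrix P (modifiedNoise α v N k) (modifiedNoise α v N m) = 0 := by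
  have hβ01 := delayIndicator_mem α hval
  -- ambient measurability of the delay indicators
  have hβmeas : ∀ a b, Measurable (delayIndicator α a b) := by
    intro a b
    unfold delayIndicator
    exact (hαmeas a b).mul
      (Finset.measurable_prod _ fun i _ => measurable_const.sub (hαmeas _ _))
  -- measurability with respect to the generated σ-algebras
  have hαm : ∀ a b, Measurable[⨆ a, ⨆ b, MeasurableSpace.comap (α a b) inferInstance] (α a b) :=
    fun a b => measurable_iff_comap_le.mpr (le_iSup_of_le a (le_iSup_of_le b le_rfl))
  have hβm : ∀ a b,
      Measurable[⨆ a, ⨆ b, MeasurableSpace.comap (α a b) inferInstance]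
        (delayIndicator α a b) := by
    intro a b
    unfold delayIndicator
    exact (hαm a b).mul
      (Finset.measurable_prod _ fun i _ => measurable_const.sub (hαm _ _))
  have hvm : ∀ p, Measurable[⨆ p, MeasurableSpace.comap (v p) inferInstance] (v p) :=
    fun p => measurable_iff_comap_le.mpr (le_iSup (fun p => MeasurableSpace.comap (v p) inferInstance) p)
  have hvim : ∀ p (i : Fin n),
      Measurable[⨆ p, MeasurableSpace.comap (v p) inferInstance] (fun ω => v p ω i) :=
    fun p i => (EuclideanSpace.proj (𝕜 := ℝ) i).continuous.measurable.comp (hvm p)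
  -- integrability facts
  have hIntv : ∀ p q (i l : Fin n), Integrable (fun ω => v p ω i * v q ω l) P := by
    intro p q i l
    rw [← memLp_one_iff_integrable]
    have h := (hv2 q l).smul (hv2 p i) (p := 2) (q := 2) (r := 1)
    exact h
  have hIntTerm : ∀ jk jm (i l : Fin n),
      Integrable (fun ω => (delayIndicator α k jk ω * delayIndicator α m jm ω) *
        (v (k - jk) ω i * v (m - jm) ω l)) P := by
    intro jk jm i l
    refine (hIntv _ _ i l).bdd_mul (c := 1)
      (((hβmeas k jk).mul (hβmeas m jm)).aestronglyMeasurable) (ae_of_all _ fun ω => ?_)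
    rcases hβ01 k jk ω with h | h <;> rcases hβ01 m jm ω with h' | h' <;>
      simp [h, h']
  ext i l
  simp only [secondMomentMatrix, Matrix.of_apply, Matrix.zero_apply]
  have hcoord : ∀ (a : ℕ) (ω : Ω) (i : Fin n),
      modifiedNoise α v N a ω i
        = ∑ j ∈ Finset.range (N + 1), delayIndicator α a j ω * v (a - j) ω i := by
    intro a ω i
    rw [show modifiedNoise α v N a ω i
        = EuclideanSpace.proj (𝕜 := ℝ) i (modifiedNoise α v N a ω) from rfl,
      modifiedNoise, map_sum]
    simp [smul_eq_mul]
  have hterm : ∀ jk ∈ Finset.range (N + 1), ∀ jm ∈ Finset.range (N + 1),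
      ∫ ω, (delayIndicator α k jk ω * delayIndicator α m jm ω) *
        (v (k - jk) ω i * v (m - jm) ω l) ∂P = 0 := by
    intro jk hjk jm hjm
    rw [Finset.mem_range] at hjk hjm
    by_cases hpq : k - jk = m - jm
    · have hz : ∀ ω, delayIndicator α k jk ω * delayIndicator α m jm ω = 0 := by
        intro ω
        rcases lt_or_gt_of_ne hkm with h | h
        · exact delayIndicator_mul_eq_zero α hval (by omega) (by omega) h hpq ω
        · rw [mul_comm]
          exact delayIndicator_mul_eq_zero α hval (by omega) (by omega) h hpq.symm ω
      simp [hz]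
    · have hF : Measurable[⨆ a, ⨆ b, MeasurableSpace.comap (α a b) inferInstance]
          (fun ω => delayIndicator α k jk ω * delayIndicator α m jm ω) :=
        (hβm k jk).mul (hβm m jm)
      have hG : Measurable[⨆ p, MeasurableSpace.comap (v p) inferInstance]
          (fun ω => v (k - jk) ω i * v (m - jm) ω l) :=
        (hvim _ i).mul (hvim _ l)
      have hIF : IndepFun (fun ω => delayIndicator α k jk ω * delayIndicator α m jm ω)
          (fun ω => v (k - jk) ω i * v (m - jm) ω l) P :=
        indep_of_indep_of_le_right
          (indep_of_indep_of_le_left hindep (measurable_iff_comap_le.mp hF))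
          (measurable_iff_comap_le.mp hG)
      have hmul := hIF.integral_mul_eq_mul_integral
        (((hβmeas k jk).mul (hβmeas m jm)).aestronglyMeasurable)
        ((((EuclideanSpace.proj (𝕜 := ℝ) i).continuous.measurable.comp (hvmeas _)).mul
          ((EuclideanSpace.proj (𝕜 := ℝ) l).continuous.measurable.comp
            (hvmeas _))).aestronglyMeasurable)
      have hv0 : ∫ ω, v (k - jk) ω i * v (m - jm) ω l ∂P = 0 := by
        have h2 := congrFun (congrFun (hvuncorr (k - jk) (m - jm) hpq) i) l
        simpa [secondMomentMatrix] using h2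
      calc ∫ ω, (delayIndicator α k jk ω * delayIndicator α m jm ω) *
            (v (k - jk) ω i * v (m - jm) ω l) ∂P
          = (∫ ω, delayIndicator α k jk ω * delayIndicator α m jm ω ∂P) *
            ∫ ω, v (k - jk) ω i * v (m - jm) ω l ∂P := hmul
        _ = 0 := by rw [hv0, mul_zero]
  simp_rw [hcoord, Finset.sum_mul_sum, mul_mul_mul_comm]
  rw [integral_finset_sum _
    (fun jk _ => integrable_finset_sum _ (fun jm _ => hIntTerm jk jm i l))]
  refine Finset.sum_eq_zero fun jk hjk => ?_
  rw [integral_finset_sum _ (fun jm _ => hIntTerm jk jm i l)]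
  exact Finset.sum_eq_zero fun jm hjm => hterm jk hjk jm hjm
end
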